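/- arXiv:2201.01320 — 3 statements merged into one kernel-verified Lean document; each statement's English description precedes it below -/
import Mathlib

section
/- Fix quadrature nodes z_1,…,z_{N−1} ∈ ℂ with derivatives z'_1,…,z'_{N−1} ∈ ℂ, a time T > 0, and a constant c > 0. For each j let û(z_j;μ) solve (z_j I − A(μ)) û(z_j;μ) = u_0(μ) + b̂(z_j;μ), and let û_r(z_j;μ) ∈ V be the Galerkin solution in a fixed N_r-dimensional subspace V ⊂ ℂ^{N_h}. Define u(T;μ) = (c/(iN)) Σ_{j=1}^{N−1} e^{z_j T} û(z_j;μ) z'_j and u_r(T;μ) = (c/(iN)) Σ_{j=1}^{N−1} e^{z_j T} û_r(z_j;μ) z'_j. If for each j the coercivity constant α_j(μ) = inf_{‖w‖=1} |w*(z_j I − A(μ))w| is positive and γ_j(μ) = ‖z_j I − A(μ)‖₂, and if for every j the best-approximation error satisfies inf_{v∈V} ‖û(z_j;μ) − v‖ ≤ d, then ‖u(T;μ) − u_r(T;μ)‖ ≤ d · (c/N) Σ_{j=1}^{N−1} e^{Re(z_j) T} |z'_j| (1 + γ_j(μ)/α_j(μ)). -/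
noncomputable def toES {𝕜 : Type*} [RCLike 𝕜] {n : ℕ} (v : Fin n → 𝕜) :
    EuclideanSpace 𝕜 (Fin n) := (WithLp.equiv 2 (Fin n → 𝕜)).symm v

noncomputable def fromES {𝕜 : Type*} [RCLike 𝕜] {n : ℕ} (v : EuclideanSpace 𝕜 (Fin n)) :
    Fin n → 𝕜 := WithLp.equiv 2 (Fin n → 𝕜) v

/-- Action of a matrix on Euclidean space. -/
noncomputable def mvES {𝕜 : Type*} [RCLike 𝕜] {n : ℕ} (M : Matrix (Fin n) (Fin n) 𝕜)
    (v : EuclideanSpace 𝕜 (Fin n)) : EuclideanSpace 𝕜 (Fin n) := toES (M.mulVec (fromES v))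

noncomputable def cvec {n : ℕ} (v : EuclideanSpace ℝ (Fin n)) : EuclideanSpace ℂ (Fin n) :=
  toES (fun i => Complex.ofReal (fromES v i))

def cmat {m n : ℕ} (M : Matrix (Fin m) (Fin n) ℝ) : Matrix (Fin m) (Fin n) ℂ :=
  M.map Complex.ofReal

/-- Spectral (operator) norm of a complex matrix. -/
noncomputable def specNorm {n : ℕ} (M : Matrix (Fin n) (Fin n) ℂ) : ℝ :=
  ‖Matrix.toEuclideanCLM (𝕜 := ℂ) M‖

/-- Coercivity constant of a complex matrix: the distance of the origin from its
numerical range. -/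
noncomputable def coer {n : ℕ} (M : Matrix (Fin n) (Fin n) ℂ) : ℝ :=
  ⨅ w : {w : EuclideanSpace ℂ (Fin n) // ‖w‖ = 1},
    ‖inner (𝕜 := ℂ) (w : EuclideanSpace ℂ (Fin n)) (mvES M w)‖

lemma mvES_eq' {n : ℕ} (M : Matrix (Fin n) (Fin n) ℂ) (v : EuclideanSpace ℂ (Fin n)) :
    mvES M v = Matrix.toEuclideanCLM (𝕜 := ℂ) M v := rfl

lemma norm_mvES_le' {n : ℕ} (M : Matrix (Fin n) (Fin n) ℂ) (v : EuclideanSpace ℂ (Fin n)) :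
    ‖mvES M v‖ ≤ specNorm M * ‖v‖ := by
  rw [mvES_eq']; exact (Matrix.toEuclideanCLM (𝕜 := ℂ) M).le_opNorm v

lemma specNorm_nonneg' {n : ℕ} (M : Matrix (Fin n) (Fin n) ℂ) : 0 ≤ specNorm M :=
  norm_nonneg _

lemma coer_mul_le' {n : ℕ} (M : Matrix (Fin n) (Fin n) ℂ) (v : EuclideanSpace ℂ (Fin n)) :
    coer M * ‖v‖ ^ 2 ≤ ‖inner (𝕜 := ℂ) v (mvES M v)‖ := by
  rcases eq_or_ne v 0 with rfl | hv
  · simp [mvES, fromES, toES]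
  · have hv' : (0:ℝ) < ‖v‖ := norm_pos_iff.mpr hv
    set a : ℂ := ((‖v‖ : ℝ) : ℂ)⁻¹ with ha
    set w : EuclideanSpace ℂ (Fin n) := a • v with hw
    have hwn : ‖w‖ = 1 := by
      rw [hw, norm_smul, ha]
      simp [abs_of_pos hv', inv_mul_cancel₀ hv'.ne']
    have h1 : coer M ≤ ‖inner (𝕜 := ℂ) w (mvES M w)‖ := by
      have hbdd : BddBelow (Set.range fun w : {w : EuclideanSpace ℂ (Fin n) // ‖w‖ = 1} =>
          ‖inner (𝕜 := ℂ) (w : EuclideanSpace ℂ (Fin n)) (mvES M w)‖) :=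
        ⟨0, by rintro x ⟨u, rfl⟩; exact norm_nonneg _⟩
      exact ciInf_le hbdd ⟨w, hwn⟩
    have hMw : mvES M w = a • mvES M v := by
      rw [hw, mvES_eq', mvES_eq', map_smul]
    have h2 : ‖inner (𝕜 := ℂ) w (mvES M w)‖
        = (‖v‖ ^ 2)⁻¹ * ‖inner (𝕜 := ℂ) v (mvES M v)‖ := by
      rw [hw, hMw, inner_smul_left, inner_smul_right, norm_mul, norm_mul, ha]
      simp only [map_inv₀, Complex.norm_conj, norm_inv, Complex.norm_real, Real.norm_eq_abs, abs_of_pos hv']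
      ring
    calc coer M * ‖v‖ ^ 2
        ≤ ‖inner (𝕜 := ℂ) w (mvES M w)‖ * ‖v‖ ^ 2 :=
          mul_le_mul_of_nonneg_right h1 (by positivity)
      _ = ‖inner (𝕜 := ℂ) v (mvES M v)‖ := by
          rw [h2]; field_simp

/-- Céa's lemma. -/
lemma cea' {n : ℕ} (M : Matrix (Fin n) (Fin n) ℂ)
    (V : Submodule ℂ (EuclideanSpace ℂ (Fin n)))
    (u ur : EuclideanSpace ℂ (Fin n)) (hurV : ur ∈ V)
    (horth : ∀ ζ ∈ V, inner (𝕜 := ℂ) (mvES M ur) ζ = inner (𝕜 := ℂ) (mvES M u) ζ)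
    (hα : 0 < coer M) (v : EuclideanSpace ℂ (Fin n)) (hv : v ∈ V) :
    ‖u - ur‖ ≤ (1 + specNorm M / coer M) * ‖u - v‖ := by
  set α := coer M with hαdef
  set γ := specNorm M with hγdef
  have hγ : 0 ≤ γ := specNorm_nonneg' M
  set e := ur - v with he
  have heV : e ∈ V := V.sub_mem hurV hv
  have horth' : inner (𝕜 := ℂ) (mvES M ur - mvES M u) e = 0 := by
    rw [inner_sub_left, horth e heV, sub_self]
  have hMe : mvES M e = mvES M (u - v) + (mvES M ur - mvES M u) := by
    rw [he]; simp only [mvES_eq', map_sub]; abel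
  have key : α * ‖e‖ ^ 2 ≤ ‖e‖ * (γ * ‖u - v‖) := by
    calc α * ‖e‖ ^ 2 ≤ ‖inner (𝕜 := ℂ) e (mvES M e)‖ := coer_mul_le' M e
      _ = ‖inner (𝕜 := ℂ) e (mvES M (u - v))‖ := by
          rw [hMe, inner_add_right, inner_eq_zero_symm.mpr horth', add_zero]
      _ ≤ ‖e‖ * ‖mvES M (u - v)‖ := by
          exact norm_inner_le_norm _ _
      _ ≤ ‖e‖ * (γ * ‖u - v‖) :=
          mul_le_mul_of_nonneg_left (norm_mvES_le' M _) (norm_nonneg _)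
  have hee : ‖e‖ ≤ γ / α * ‖u - v‖ := by
    rcases (norm_nonneg e).eq_or_lt with h0 | h0
    · rw [← h0]; positivity
    · rw [div_mul_eq_mul_div, le_div_iff₀ hα]
      nlinarith [key, h0]
  have hsub : u - ur = (u - v) - e := by rw [he]; abel
  calc ‖u - ur‖ = ‖(u - v) - e‖ := by rw [hsub]
    _ ≤ ‖u - v‖ + ‖e‖ := norm_sub_le _ _
    _ ≤ ‖u - v‖ + γ / α * ‖u - v‖ := by linarith
    _ = (1 + γ / α) * ‖u - v‖ := by ring


/-- error bound at time `T` between the trapezoidal inverse-Laplace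
reconstruction from the exact Laplace-domain solutions and from their Galerkin
approximations in a fixed `N_r`-dimensional subspace `V`. -/
theorem quadrature_galerkin_error_bound
    (Nh N Nr : ℕ) (T : ℝ) (hT : 0 < T) (c : ℝ) (hc : 0 < c)
    (z z' : Fin (N - 1) → ℂ)
    (A : Matrix (Fin Nh) (Fin Nh) ℝ)
    (u0 : EuclideanSpace ℝ (Fin Nh))
    (bhat : Fin (N - 1) → EuclideanSpace ℂ (Fin Nh))
    (V : Submodule ℂ (EuclideanSpace ℂ (Fin Nh)))
    (hV : Module.finrank ℂ V = Nr)
    (uhat uhatr : Fin (N - 1) → EuclideanSpace ℂ (Fin Nh))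
    -- `û(z_j;μ)` solves `(z_j I - A(μ)) û(z_j;μ) = u₀(μ) + b̂(z_j;μ)`
    (huhat : ∀ j, mvES (z j • (1 : Matrix (Fin Nh) (Fin Nh) ℂ) - cmat A) (uhat j)
      = cvec u0 + bhat j)
    -- `û_r(z_j;μ) ∈ V` is the Galerkin solution
    (huhatrV : ∀ j, uhatr j ∈ V)
    (hGalerkin : ∀ j, ∀ ζ ∈ V,
      inner (𝕜 := ℂ) (mvES (z j • (1 : Matrix (Fin Nh) (Fin Nh) ℂ) - cmat A) (uhatr j)) ζ
        = inner (𝕜 := ℂ) (cvec u0 + bhat j) ζ)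
    -- positive coercivity constants
    (hα : ∀ j, 0 < coer (z j • (1 : Matrix (Fin Nh) (Fin Nh) ℂ) - cmat A))
    -- uniform best-approximation bound
    (d : ℝ)
    (hd : ∀ j, (⨅ v : V, ‖uhat j - (v : EuclideanSpace ℂ (Fin Nh))‖) ≤ d) :
    ‖((c / (Complex.I * N)) • ∑ j, (Complex.exp (z j * T) * z' j) • uhat j)
      - ((c / (Complex.I * N)) • ∑ j, (Complex.exp (z j * T) * z' j) • uhatr j)‖
      ≤ d * ((c / N) * ∑ j, Real.exp ((z j).re * T) * ‖z' j‖ *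
          (1 + specNorm (z j • (1 : Matrix (Fin Nh) (Fin Nh) ℂ) - cmat A) /
            coer (z j • (1 : Matrix (Fin Nh) (Fin Nh) ℂ) - cmat A)) ) := by
  by_cases hN1 : N - 1 = 0
  · haveI : IsEmpty (Fin (N - 1)) := by rw [hN1]; infer_instance
    simp
  -- j-wise Céa bound against `d`
  have hj : ∀ j, ‖uhat j - uhatr j‖ ≤
      (1 + specNorm (z j • (1 : Matrix (Fin Nh) (Fin Nh) ℂ) - cmat A) /
        coer (z j • (1 : Matrix (Fin Nh) (Fin Nh) ℂ) - cmat A)) * d := by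
    intro j
    set Mj := z j • (1 : Matrix (Fin Nh) (Fin Nh) ℂ) - cmat A with hMj
    have hdiv : 0 ≤ specNorm Mj / coer Mj := div_nonneg (specNorm_nonneg' Mj) (hα j).le
    have hK : 0 < 1 + specNorm Mj / coer Mj := by linarith
    have hcea : ∀ v : V, ‖uhat j - uhatr j‖
        ≤ (1 + specNorm Mj / coer Mj) * ‖uhat j - (v : EuclideanSpace ℂ (Fin Nh))‖ :=
      fun v => cea' Mj V (uhat j) (uhatr j) (huhatrV j)
        (fun ζ hζ => (hGalerkin j ζ hζ).trans (by rw [huhat j])) (hα j) v v.2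
    have hinf : ‖uhat j - uhatr j‖ / (1 + specNorm Mj / coer Mj) ≤ d := by
      refine le_trans (le_ciInf fun v => ?_) (hd j)
      rw [div_le_iff₀ hK]
      exact (hcea v).trans_eq (mul_comm _ _)
    have := (div_le_iff₀ hK).mp hinf
    rw [mul_comm]
    exact this
  have hNpos : (0:ℝ) < N := by
    have : 2 ≤ N := by omega
    exact_mod_cast (by omega : 0 < N)
  -- rewrite the difference as one sum
  have hdiff : ((c / (Complex.I * N)) • ∑ j, (Complex.exp (z j * T) * z' j) • uhat j)
      - ((c / (Complex.I * N)) • ∑ j, (Complex.exp (z j * T) * z' j) • uhatr j)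
      = (c / (Complex.I * N) : ℂ) • ∑ j, (Complex.exp (z j * T) * z' j) • (uhat j - uhatr j) := by
    rw [← smul_sub, ← Finset.sum_sub_distrib]
    congr 1
    exact Finset.sum_congr rfl fun j _ => (smul_sub _ _ _).symm
  have habs : ‖(↑c / (Complex.I * ↑N) : ℂ)‖ = c / N := by
    simp [map_div₀, map_mul, Complex.norm_I,
      Complex.norm_real, Complex.norm_natCast, abs_of_pos hc]
  rw [hdiff, norm_smul, habs]
  have hsum : ‖∑ j, (Complex.exp (z j * T) * z' j) • (uhat j - uhatr j)‖
      ≤ ∑ j, (Real.exp ((z j).re * T) * ‖z' j‖ *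
          (1 + specNorm (z j • (1 : Matrix (Fin Nh) (Fin Nh) ℂ) - cmat A) /
            coer (z j • (1 : Matrix (Fin Nh) (Fin Nh) ℂ) - cmat A))) * d := by
    refine (norm_sum_le _ _).trans (Finset.sum_le_sum fun j _ => ?_)
    rw [norm_smul]
    have h1 : ‖Complex.exp (z j * T) * z' j‖
        = Real.exp ((z j).re * T) * ‖z' j‖ := by
      rw [norm_mul, Complex.norm_exp]
      congr 2
      simp [Complex.mul_re]
    rw [h1]
    calc Real.exp ((z j).re * T) * ‖z' j‖ * ‖uhat j - uhatr j‖
        ≤ Real.exp ((z j).re * T) * ‖z' j‖ *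
            ((1 + specNorm (z j • (1 : Matrix (Fin Nh) (Fin Nh) ℂ) - cmat A) /
              coer (z j • (1 : Matrix (Fin Nh) (Fin Nh) ℂ) - cmat A)) * d) :=
          mul_le_mul_of_nonneg_left (hj j) (by positivity)
      _ = _ := by ring
  calc c / N * ‖∑ j, (Complex.exp (z j * T) * z' j) • (uhat j - uhatr j)‖
      ≤ c / N * ∑ j, (Real.exp ((z j).re * T) * ‖z' j‖ *
          (1 + specNorm (z j • (1 : Matrix (Fin Nh) (Fin Nh) ℂ) - cmat A) /
            coer (z j • (1 : Matrix (Fin Nh) (Fin Nh) ℂ) - cmat A))) * d :=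
        mul_le_mul_of_nonneg_left hsum (div_nonneg hc.le (Nat.cast_nonneg N))
    _ = _ := by rw [← Finset.sum_mul]; ring
end

section
/- Let A : ℝ → ℂ^{N×M} be differentiable at μ_0, and suppose there exist functions σ : ℝ → ℝ, u : ℝ → ℂ^N, v : ℝ → ℂ^M, all differentiable at μ_0, such that in a neighborhood of μ_0: A(μ) v(μ) = σ(μ) u(μ), A(μ)* u(μ) = σ(μ) v(μ), ‖u(μ)‖ = ‖v(μ)‖ = 1, and σ(μ_0) ≠ 0 (so σ is a singular value of A with left singular vector u and right singular vector v). Then the derivative of the singular value satisfies σ'(μ_0) = Re( u(μ_0)* A'(μ_0) v(μ_0) ). -/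
/-- Action of a (rectangular) matrix on Euclidean space. -/
noncomputable def mvES' {𝕜 : Type*} [RCLike 𝕜] {m n : ℕ} (M : Matrix (Fin m) (Fin n) 𝕜)
    (v : EuclideanSpace 𝕜 (Fin n)) : EuclideanSpace 𝕜 (Fin m) := toES (M.mulVec (fromES v))

lemma inner_mvES'_adj {m n : ℕ} (M : Matrix (Fin m) (Fin n) ℂ) (x : EuclideanSpace ℂ (Fin m))
    (y : EuclideanSpace ℂ (Fin n)) :
    inner (𝕜 := ℂ) (mvES' M.conjTranspose x) y = inner (𝕜 := ℂ) x (mvES' M y) := by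
  simp only [mvES', toES, fromES, PiLp.inner_apply, RCLike.inner_apply, WithLp.equiv_symm_apply, PiLp.toLp_apply,
    WithLp.equiv_apply, Matrix.mulVec, dotProduct, Matrix.conjTranspose_apply,
    map_sum, map_mul, Finset.mul_sum, Finset.sum_mul, starRingEnd_apply, star_star]
  rw [Finset.sum_comm]
  congr 1; ext j; congr 1; ext i; ring

lemma comp_proj {n : ℕ} {v : ℝ → EuclideanSpace ℂ (Fin n)} {v' : EuclideanSpace ℂ (Fin n)} {μ0 : ℝ}
    (hv : HasDerivAt v v' μ0) (j : Fin n) :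
    HasDerivAt (fun μ => v μ j) (v' j) μ0 := by
  have := ((EuclideanSpace.proj (𝕜 := ℂ) j).restrictScalars ℝ).hasFDerivAt.comp_hasDerivAt μ0 hv
  simpa [Function.comp_def] using this

lemma hasDerivAt_mvES' {m n : ℕ} {A : ℝ → Matrix (Fin m) (Fin n) ℂ}
    {A' : Matrix (Fin m) (Fin n) ℂ} {μ0 : ℝ}
    (hA : ∀ i j, HasDerivAt (fun μ => A μ i j) (A' i j) μ0)
    {v : ℝ → EuclideanSpace ℂ (Fin n)} {v' : EuclideanSpace ℂ (Fin n)}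
    (hv : HasDerivAt v v' μ0) :
    HasDerivAt (fun μ => mvES' (A μ) (v μ)) (mvES' A' (v μ0) + mvES' (A μ0) v') μ0 := by
  have hF : ∀ i, HasDerivAt (fun μ => ∑ j, A μ i j * v μ j)
      (∑ j, (A' i j * v μ0 j + A μ0 i j * v' j)) μ0 := fun i =>
    HasDerivAt.fun_sum fun j _ => (hA i j).mul (comp_proj hv j)
  have hFpi : HasDerivAt (fun μ => (fun i => ∑ j, A μ i j * v μ j))
      (fun i => ∑ j, (A' i j * v μ0 j + A μ0 i j * v' j)) μ0 := hasDerivAt_pi.2 hF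
  have := ((PiLp.continuousLinearEquiv 2 ℂ (fun _ : Fin m => ℂ)).symm.toContinuousLinearMap.restrictScalars
      ℝ).hasFDerivAt.comp_hasDerivAt μ0 hFpi
  have hD : (mvES' A' (v μ0) + mvES' (A μ0) v') =
      ((PiLp.continuousLinearEquiv 2 ℂ (fun _ : Fin m => ℂ)).symm.toContinuousLinearMap.restrictScalars
        ℝ) (fun i => ∑ j, (A' i j * v μ0 j + A μ0 i j * v' j)) := by
    ext i
    simp [mvES', toES, fromES, Matrix.mulVec, dotProduct, Finset.sum_add_distrib,
      PiLp.continuousLinearEquiv]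
    rfl
  rw [hD]
  exact this

/-- derivative of a (nonzero, smoothly parametrized) singular value:
`σ'(μ₀) = Re(u(μ₀)* A'(μ₀) v(μ₀))`. -/
theorem singular_value_derivative
    (N M : ℕ)
    (A : ℝ → Matrix (Fin N) (Fin M) ℂ) (A' : Matrix (Fin N) (Fin M) ℂ) (μ0 : ℝ)
    (hA : ∀ i j, HasDerivAt (fun μ => A μ i j) (A' i j) μ0)
    (σ : ℝ → ℝ) (σ' : ℝ) (hσ : HasDerivAt σ σ' μ0)
    (u : ℝ → EuclideanSpace ℂ (Fin N)) (u' : EuclideanSpace ℂ (Fin N))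
    (hu : HasDerivAt u u' μ0)
    (v : ℝ → EuclideanSpace ℂ (Fin M)) (v' : EuclideanSpace ℂ (Fin M))
    (hv : HasDerivAt v v' μ0)
    -- in a neighborhood of `μ₀`: `A v = σ u`, `A* u = σ v`, `‖u‖ = ‖v‖ = 1`
    (hAv : ∀ᶠ μ in nhds μ0, mvES' (A μ) (v μ) = σ μ • u μ)
    (hAu : ∀ᶠ μ in nhds μ0, mvES' (A μ).conjTranspose (u μ) = σ μ • v μ)
    (hun : ∀ᶠ μ in nhds μ0, ‖u μ‖ = 1)
    (hvn : ∀ᶠ μ in nhds μ0, ‖v μ‖ = 1)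
    (hσ0 : σ μ0 ≠ 0) :
    σ' = (inner (𝕜 := ℂ) (u μ0) (mvES' A' (v μ0))).re := by
  -- derivative of the product A(μ) v(μ)
  have h1 := hasDerivAt_mvES' hA hv
  -- derivative of inner product ⟪u, A v⟫
  have h2 := hu.inner ℂ h1
  -- eventually ⟪u μ, A μ v μ⟫ = σ μ
  have hev : (fun μ => inner (𝕜 := ℂ) (u μ) (mvES' (A μ) (v μ))) =ᶠ[nhds μ0]
      (fun μ => (σ μ : ℂ)) := by
    filter_upwards [hAv, hun] with μ h1' h2'
    rw [h1', RCLike.real_smul_eq_coe_smul (K := ℂ), inner_smul_right,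
      inner_self_eq_norm_sq_to_K, h2']
    norm_num
  have hσℂ : HasDerivAt (fun μ => (σ μ : ℂ)) (σ' : ℂ) μ0 := hσ.ofReal_comp
  have h3 : HasDerivAt (fun μ => (σ μ : ℂ))
      (inner (𝕜 := ℂ) (u μ0) (mvES' A' (v μ0) + mvES' (A μ0) v') +
        inner (𝕜 := ℂ) u' (mvES' (A μ0) (v μ0))) μ0 := h2.congr_of_eventuallyEq hev.symm
  have hkey : (σ' : ℂ) = inner (𝕜 := ℂ) (u μ0) (mvES' A' (v μ0) + mvES' (A μ0) v') +
      inner (𝕜 := ℂ) u' (mvES' (A μ0) (v μ0)) := hσℂ.unique h3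
  -- Re⟪u μ0, u'⟫ = 0
  have hru : (inner (𝕜 := ℂ) (u μ0) u').re = 0 := by
    have hc : (fun μ => inner (𝕜 := ℂ) (u μ) (u μ)) =ᶠ[nhds μ0] (fun _ => (1 : ℂ)) := by
      filter_upwards [hun] with μ h
      rw [inner_self_eq_norm_sq_to_K, h]; norm_num
    have h4 : HasDerivAt (fun μ => inner (𝕜 := ℂ) (u μ) (u μ))
        (inner (𝕜 := ℂ) (u μ0) u' + inner (𝕜 := ℂ) u' (u μ0)) μ0 := hu.inner ℂ hu
    have h5 : HasDerivAt (fun _ : ℝ => (1 : ℂ))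
        (inner (𝕜 := ℂ) (u μ0) u' + inner (𝕜 := ℂ) u' (u μ0)) μ0 :=
      h4.congr_of_eventuallyEq hc.symm
    have h6 := (hasDerivAt_const μ0 (1 : ℂ)).unique h5
    have h7 : inner (𝕜 := ℂ) u' (u μ0) = starRingEnd ℂ (inner (𝕜 := ℂ) (u μ0) u') :=
      (inner_conj_symm _ _).symm
    rw [h7] at h6
    have := congrArg Complex.re h6
    simp only [Complex.zero_re, Complex.add_re, Complex.conj_re] at this
    linarith
  have hrv : (inner (𝕜 := ℂ) (v μ0) v').re = 0 := by
    have hc : (fun μ => inner (𝕜 := ℂ) (v μ) (v μ)) =ᶠ[nhds μ0] (fun _ => (1 : ℂ)) := by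
      filter_upwards [hvn] with μ h
      rw [inner_self_eq_norm_sq_to_K, h]; norm_num
    have h4 : HasDerivAt (fun μ => inner (𝕜 := ℂ) (v μ) (v μ))
        (inner (𝕜 := ℂ) (v μ0) v' + inner (𝕜 := ℂ) v' (v μ0)) μ0 := hv.inner ℂ hv
    have h5 : HasDerivAt (fun _ : ℝ => (1 : ℂ))
        (inner (𝕜 := ℂ) (v μ0) v' + inner (𝕜 := ℂ) v' (v μ0)) μ0 :=
      h4.congr_of_eventuallyEq hc.symm
    have h6 := (hasDerivAt_const μ0 (1 : ℂ)).unique h5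
    have h7 : inner (𝕜 := ℂ) v' (v μ0) = starRingEnd ℂ (inner (𝕜 := ℂ) (v μ0) v') :=
      (inner_conj_symm _ _).symm
    rw [h7] at h6
    have := congrArg Complex.re h6
    simp only [Complex.zero_re, Complex.add_re, Complex.conj_re] at this
    linarith
  -- simplify hkey
  have hAv0 : mvES' (A μ0) (v μ0) = σ μ0 • u μ0 := hAv.self_of_nhds
  have hAu0 : mvES' (A μ0).conjTranspose (u μ0) = σ μ0 • v μ0 := hAu.self_of_nhds
  have hmid : inner (𝕜 := ℂ) (u μ0) (mvES' (A μ0) v') = σ μ0 * inner (𝕜 := ℂ) (v μ0) v' := by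
    rw [← inner_mvES'_adj, hAu0, RCLike.real_smul_eq_coe_smul (K := ℂ), inner_smul_left, RCLike.conj_ofReal]
    norm_cast
  have hend : inner (𝕜 := ℂ) u' (mvES' (A μ0) (v μ0)) = σ μ0 * inner (𝕜 := ℂ) u' (u μ0) := by
    rw [hAv0, RCLike.real_smul_eq_coe_smul (K := ℂ), inner_smul_right]
    norm_cast
  have h8 : inner (𝕜 := ℂ) u' (u μ0) = starRingEnd ℂ (inner (𝕜 := ℂ) (u μ0) u') :=
    (inner_conj_symm _ _).symm
  rw [inner_add_right, hmid, hend, h8] at hkey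
  have := congrArg Complex.re hkey
  simp only [Complex.add_re, Complex.mul_re, Complex.ofReal_re, Complex.ofReal_im,
    Complex.conj_re, Complex.conj_im, zero_mul, sub_zero, mul_neg] at this
  rw [hru, hrv] at this
  simpa using this
end

section
/- Let z(s) = −s² − 2 i a s + a₂ with a, a₂ ∈ ℝ be the parabolic contour parametrization, let T > 0, δ > 0, and set s_j = jδ for j ∈ ℕ. Let G : ℝ → ℂ^{N_h} satisfy ‖G(s)‖ ≤ K for all s ≥ 0. Then there exist constants c₀ > 0 and c₁ > 0, depending on K, T, δ, a, a₂ but not on M, such that the tail of the trapezoidal sum of the inverse-Laplace quadrature satisfies ‖ Σ_{j=M+1}^{∞} e^{z(s_j) T} G(s_j) z'(s_j) δ ‖ ≤ c₀ e^{−c₁ M²} for every M ∈ ℕ. -/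
set_option maxHeartbeats 1000000


/-- Gaussian decay of the tail of the trapezoidal sum of the
inverse-Laplace quadrature along the parabolic contour `z(s) = -s² - 2ias + a₂`:
there are `c₀, c₁ > 0`, independent of `M`, with
`‖Σ_{j>M} e^{z(s_j)T} G(s_j) z'(s_j) δ‖ ≤ c₀ e^{-c₁ M²}`. -/
theorem parabolic_contour_quadrature_tail_bound
    (Nh : ℕ) (a a2 T δ K : ℝ) (hT : 0 < T) (hδ : 0 < δ)
    (G : ℝ → EuclideanSpace ℂ (Fin Nh))
    (hG : ∀ s : ℝ, 0 ≤ s → ‖G s‖ ≤ K) :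
    ∃ c0 > (0 : ℝ), ∃ c1 > (0 : ℝ), ∀ M : ℕ,
      ‖∑' j : {j : ℕ // M < j},
          (Complex.exp ((-(((j : ℕ) : ℝ) * δ : ℂ) ^ 2
              - 2 * Complex.I * a * (((j : ℕ) : ℝ) * δ : ℂ) + (a2 : ℂ)) * (T : ℂ))
            * (-2 * (((j : ℕ) : ℝ) * δ : ℂ) - 2 * Complex.I * a) * (δ : ℂ))
            • G (((j : ℕ) : ℝ) * δ)‖
        ≤ c0 * Real.exp (-c1 * (M : ℝ) ^ 2) := by
  have hK : 0 ≤ K := le_trans (norm_nonneg (G 0)) (hG 0 le_rfl)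
  set c : ℝ := δ ^ 2 * T with hc
  have hcpos : 0 < c := by positivity
  set r : ℝ := Real.exp (-(c / 4)) with hrdef
  have hr0 : 0 < r := Real.exp_pos _
  have hr1 : r < 1 := Real.exp_lt_one_iff.mpr (by linarith)
  have h1r : 0 < 1 - r := by linarith
  set E : ℝ := Real.exp (a2 * T) with hE
  set D : ℝ := 2 * δ * K * E * (4 * δ / c + |a|) with hD
  have hD0 : 0 ≤ D := by positivity
  refine ⟨D / (1 - r) + 1, by positivity, c / 2, by positivity, fun M => ?_⟩
  -- the key per-term scalar bound
  have key : ∀ j : ℕ, M < j →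
      Real.exp ((a2 - ((j : ℝ) * δ) ^ 2) * T) * (2 * ((j : ℝ) * δ) + 2 * |a|) * δ * K
        ≤ D * Real.exp (-(c / 2) * (M : ℝ) ^ 2) * r ^ j := by
    intro j hj
    have hjM : (M : ℝ) + 1 ≤ (j : ℝ) := by exact_mod_cast hj
    have hj0 : (0 : ℝ) ≤ (j : ℝ) := Nat.cast_nonneg j
    have hM0 : (0 : ℝ) ≤ (M : ℝ) := Nat.cast_nonneg M
    set A : ℝ := Real.exp (-(c / 2) * (M : ℝ) ^ 2 + -(c / 4) * (j : ℝ)) with hA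
    set B : ℝ := Real.exp (-(c / 4) * (j : ℝ)) with hB
    have hA0 : 0 < A := Real.exp_pos _
    have hB0 : 0 < B := Real.exp_pos _
    have hrj : r ^ j = B := by
      rw [hB, hrdef, ← Real.exp_nat_mul]
      ring_nf
    have hAe : A = Real.exp (-(c / 2) * (M : ℝ) ^ 2) * B := by
      rw [hA, hB, ← Real.exp_add]
    -- f1 : exp((a2 - s^2) T) ≤ E * (A * B)
    have f1 : Real.exp ((a2 - ((j : ℝ) * δ) ^ 2) * T) ≤ E * (A * B) := by
      rw [hE, hA, hB, ← Real.exp_add, ← Real.exp_add]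
      apply Real.exp_le_exp.mpr
      have hjj : (M : ℝ) ^ 2 ≤ (j : ℝ) ^ 2 := by nlinarith
      have hjj2 : (j : ℝ) ≤ (j : ℝ) ^ 2 := by nlinarith
      have hcc : ((j : ℝ) * δ) ^ 2 * T = c * (j : ℝ) ^ 2 := by rw [hc]; ring
      nlinarith [hcpos, hjj, hjj2]
    -- f2 : (s + |a|) * B ≤ 4δ/c + |a|
    have f2 : ((j : ℝ) * δ + |a|) * B ≤ 4 * δ / c + |a| := by
      have hx : (c / 4 * (j : ℝ)) * B ≤ 1 := by
        have h1 : c / 4 * (j : ℝ) ≤ Real.exp (c / 4 * (j : ℝ)) :=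
          le_trans (by linarith) (Real.add_one_le_exp _)
        have h2 : Real.exp (c / 4 * (j : ℝ)) * B = 1 := by
          rw [hB, ← Real.exp_add]; ring_nf; exact Real.exp_zero
        calc (c / 4 * (j : ℝ)) * B ≤ Real.exp (c / 4 * (j : ℝ)) * B :=
              mul_le_mul_of_nonneg_right h1 hB0.le
          _ = 1 := h2
      have hB1 : B ≤ 1 := Real.exp_le_one_iff.mpr (by nlinarith)
      have hs : (j : ℝ) * δ * B ≤ 4 * δ / c := by
        have h3 : (j : ℝ) * δ * B = (4 * δ / c) * ((c / 4 * (j : ℝ)) * B) := by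
          field_simp
        rw [h3]
        have h4 : 0 ≤ 4 * δ / c := by positivity
        calc (4 * δ / c) * ((c / 4 * (j : ℝ)) * B) ≤ (4 * δ / c) * 1 :=
              mul_le_mul_of_nonneg_left hx h4
          _ = 4 * δ / c := mul_one _
      have ha2 : |a| * B ≤ |a| := by
        calc |a| * B ≤ |a| * 1 := mul_le_mul_of_nonneg_left hB1 (abs_nonneg a)
          _ = |a| := mul_one _
      have expand : ((j : ℝ) * δ + |a|) * B = (j : ℝ) * δ * B + |a| * B := by ring
      rw [expand]; linarith
    rw [hrj]
    have hjd : 0 ≤ (j : ℝ) * δ := mul_nonneg hj0 hδ.le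
    have hEpos : 0 < E := Real.exp_pos _
    have h6 : (0:ℝ) ≤ 2 * δ * K * E * A :=
      mul_nonneg (mul_nonneg (mul_nonneg (mul_nonneg (by norm_num) hδ.le) hK) hEpos.le) hA0.le
    have h7 : (0:ℝ) ≤ (2 * ((j : ℝ) * δ) + 2 * |a|) * δ * K :=
      mul_nonneg (mul_nonneg (by linarith [abs_nonneg a]) hδ.le) hK
    calc Real.exp ((a2 - ((j : ℝ) * δ) ^ 2) * T) * (2 * ((j : ℝ) * δ) + 2 * |a|) * δ * K
        = Real.exp ((a2 - ((j : ℝ) * δ) ^ 2) * T) * ((2 * ((j : ℝ) * δ) + 2 * |a|) * δ * K) := by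
          ring
      _ ≤ (E * (A * B)) * ((2 * ((j : ℝ) * δ) + 2 * |a|) * δ * K) :=
          mul_le_mul_of_nonneg_right f1 h7
      _ = (2 * δ * K * E * A) * (((j : ℝ) * δ + |a|) * B) := by ring
      _ ≤ (2 * δ * K * E * A) * (4 * δ / c + |a|) := mul_le_mul_of_nonneg_left f2 h6
      _ = D * Real.exp (-(c / 2) * (M : ℝ) ^ 2) * B := by rw [hD, hAe]; ring
  -- per-term norm bound
  set g : {j : ℕ // M < j} → ℝ :=
    fun j => D * Real.exp (-(c / 2) * (M : ℝ) ^ 2) * r ^ (j : ℕ) with hg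
  have hnorm : ∀ j : {j : ℕ // M < j},
      ‖(Complex.exp ((-(((j : ℕ) : ℝ) * δ : ℂ) ^ 2
              - 2 * Complex.I * a * (((j : ℕ) : ℝ) * δ : ℂ) + (a2 : ℂ)) * (T : ℂ))
            * (-2 * (((j : ℕ) : ℝ) * δ : ℂ) - 2 * Complex.I * a) * (δ : ℂ))
            • G (((j : ℕ) : ℝ) * δ)‖ ≤ g j := by
    intro j
    set s : ℝ := ((j : ℕ) : ℝ) * δ with hsdef
    have hs0 : 0 ≤ s := mul_nonneg (Nat.cast_nonneg _) hδ.le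
    have hX : ((((j : ℕ) : ℝ) : ℂ)) * ((δ : ℝ) : ℂ) = ((s : ℝ) : ℂ) := by
      rw [hsdef]; push_cast; ring
    rw [norm_smul, hX]
    have habs_exp : ‖(Complex.exp ((-(s : ℂ) ^ 2
        - 2 * Complex.I * a * (s : ℂ) + (a2 : ℂ)) * (T : ℂ)))‖
        = Real.exp ((a2 - s ^ 2) * T) := by
      have h0 : (-(s : ℂ) ^ 2 - 2 * Complex.I * a * (s : ℂ) + (a2 : ℂ)) * (T : ℂ)
          = Complex.ofReal ((a2 - s ^ 2) * T) + Complex.ofReal (-2 * a * s * T) * Complex.I := by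
        push_cast; ring
      rw [h0, Complex.norm_exp]
      simp [← Complex.ofReal_pow]
    have habs_z : ‖(-2 * (s : ℂ) - 2 * Complex.I * a)‖ ≤ 2 * s + 2 * |a| := by
      calc ‖(-2 * (s : ℂ) - 2 * Complex.I * a)‖
          ≤ ‖(-2 * (s : ℂ))‖ + ‖(2 * Complex.I * a)‖ :=
            norm_sub_le _ _
        _ ≤ 2 * s + 2 * |a| := by
            simp [map_mul, Complex.norm_real, Real.norm_eq_abs, abs_of_nonneg hs0]
    have hGb : ‖G s‖ ≤ K := hG s hs0
    have hmm : ‖(-2 * (s : ℂ) - 2 * Complex.I * a)‖ * ‖G s‖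
        ≤ (2 * s + 2 * |a|) * K :=
      mul_le_mul habs_z hGb (norm_nonneg _) (by linarith [abs_nonneg a])
    calc ‖(Complex.exp ((-(s : ℂ) ^ 2 - 2 * Complex.I * a * (s : ℂ) + (a2 : ℂ)) * (T : ℂ))
            * (-2 * (s : ℂ) - 2 * Complex.I * a) * (δ : ℂ))‖ * ‖G s‖
        = Real.exp ((a2 - s ^ 2) * T)
            * (‖(-2 * (s : ℂ) - 2 * Complex.I * a)‖ * ‖G s‖) * δ := by
          rw [norm_mul, norm_mul, habs_exp, Complex.norm_real, Real.norm_eq_abs,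
            abs_of_nonneg hδ.le]
          ring
      _ ≤ Real.exp ((a2 - s ^ 2) * T) * ((2 * s + 2 * |a|) * K) * δ := by
          have e1 : (0:ℝ) ≤ Real.exp ((a2 - s ^ 2) * T) := (Real.exp_pos _).le
          exact mul_le_mul_of_nonneg_right (mul_le_mul_of_nonneg_left hmm e1) hδ.le
      _ = Real.exp ((a2 - s ^ 2) * T) * (2 * s + 2 * |a|) * δ * K := by ring
      _ ≤ D * Real.exp (-(c / 2) * (M : ℝ) ^ 2) * r ^ ((j : ℕ)) := key (j : ℕ) j.2
  -- summability of the geometric bound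
  have hsum_r : Summable (fun j : {j : ℕ // M < j} => r ^ (j : ℕ)) :=
    (summable_geometric_of_lt_one hr0.le hr1).subtype {j : ℕ | M < j}
  have hsum_g : Summable g := hsum_r.mul_left _
  have hbound := tsum_of_norm_bounded hsum_g.hasSum hnorm
  refine le_trans hbound ?_
  have htsum_g : ∑' j, g j
      = D * Real.exp (-(c / 2) * (M : ℝ) ^ 2) * ∑' j : {j : ℕ // M < j}, r ^ (j : ℕ) :=
    tsum_mul_left
  have htail : ∑' j : {j : ℕ // M < j}, r ^ (j : ℕ) ≤ (1 - r)⁻¹ := by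
    have h5 : ∑' j : {j : ℕ // M < j}, r ^ (j : ℕ) ≤ ∑' j : ℕ, r ^ j :=
      Summable.tsum_le_tsum_of_inj (fun j => (j : ℕ)) Subtype.coe_injective
        (fun n _ => pow_nonneg hr0.le n) (fun b => le_rfl) hsum_r
        (summable_geometric_of_lt_one hr0.le hr1)
    rwa [tsum_geometric_of_lt_one hr0.le hr1] at h5
  rw [htsum_g]
  have hexp : 0 < Real.exp (-(c / 2) * (M : ℝ) ^ 2) := Real.exp_pos _
  have hts0 : 0 ≤ ∑' j : {j : ℕ // M < j}, r ^ (j : ℕ) :=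
    tsum_nonneg fun j => pow_nonneg hr0.le _
  have hstep : D * (∑' j : {j : ℕ // M < j}, r ^ (j : ℕ)) ≤ D / (1 - r) + 1 := by
    have : D * (∑' j : {j : ℕ // M < j}, r ^ (j : ℕ)) ≤ D * (1 - r)⁻¹ :=
      mul_le_mul_of_nonneg_left htail hD0
    rw [div_eq_mul_inv]
    linarith
  calc D * Real.exp (-(c / 2) * (M : ℝ) ^ 2) * ∑' j : {j : ℕ // M < j}, r ^ (j : ℕ)
      = (D * ∑' j : {j : ℕ // M < j}, r ^ (j : ℕ)) * Real.exp (-(c / 2) * (M : ℝ) ^ 2) := by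
        ring
    _ ≤ (D / (1 - r) + 1) * Real.exp (-(c / 2) * (M : ℝ) ^ 2) :=
        mul_le_mul_of_nonneg_right hstep hexp.le
end
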